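/- arXiv:2409.18625 — 2 statements merged into one kernel-verified Lean document; each statement's English description precedes it below -/
import Mathlib

section
/- For every t > 0, ∫ₜ^∞ [ (1 − e^{−y})e^{−y} + e^{−y}(1 − e^{−t})² ] / [ e^{−t}(1 − e^{−y})(2 − e^{−t}) ] dy = 1/(2 − e^{−t}) − ((1 − e^{−t})² / (e^{−t}(2 − e^{−t}))) · log(1 − e^{−t}). -/
open MeasureTheory

/-- The integral giving the mean regression curve `E(T | T₁ = t) − t` for the system
`T = max(X₁, min(X₂, X₃))` with standard exponential components coupled (components 2, 3)
by a Clayton survival copula with `θ = 1`. -/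
theorem mean_regression_integral_clayton (t : ℝ) (ht : 0 < t) :
    (∫ y in Set.Ioi t,
        ((1 - Real.exp (-y)) * Real.exp (-y) + Real.exp (-y) * (1 - Real.exp (-t)) ^ 2) /
          (Real.exp (-t) * (1 - Real.exp (-y)) * (2 - Real.exp (-t)))) =
      1 / (2 - Real.exp (-t)) -
        ((1 - Real.exp (-t)) ^ 2 / (Real.exp (-t) * (2 - Real.exp (-t)))) *
          Real.log (1 - Real.exp (-t)) := by
  set a := Real.exp (-t) with ha
  have ha0 : 0 < a := Real.exp_pos _
  have ha1 : a < 1 := by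
    rw [ha, ← Real.exp_zero]
    exact Real.exp_lt_exp.mpr (by linarith)
  set f : ℝ → ℝ := fun y =>
    ((1 - Real.exp (-y)) * Real.exp (-y) + Real.exp (-y) * (1 - a) ^ 2) /
      (a * (1 - Real.exp (-y)) * (2 - a)) with hf
  set F : ℝ → ℝ := fun y =>
    (-Real.exp (-y) + (1 - a) ^ 2 * Real.log (1 - Real.exp (-y))) / (a * (2 - a)) with hFdef
  have hE : ∀ y : ℝ, 0 < y → Real.exp (-y) < 1 := fun y hy => by
    rw [← Real.exp_zero]; exact Real.exp_lt_exp.mpr (by linarith)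
  have hderiv : ∀ y : ℝ, 0 < y → HasDerivAt F (f y) y := by
    intro y hy
    have hE1 : Real.exp (-y) < 1 := hE y hy
    have hne : 1 - Real.exp (-y) ≠ 0 := by have := Real.exp_pos (-y); linarith
    have h1 : HasDerivAt (fun y : ℝ => Real.exp (-y)) (-Real.exp (-y)) y := by
      simpa [Function.comp_def] using (Real.hasDerivAt_exp (-y)).comp y ((hasDerivAt_id y).neg)
    have h2 : HasDerivAt (fun y : ℝ => 1 - Real.exp (-y)) (Real.exp (-y)) y := by
      simpa [Pi.sub_def] using ((hasDerivAt_const y (1 : ℝ)).sub h1)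
    have h3 : HasDerivAt (fun y : ℝ => Real.log (1 - Real.exp (-y)))
        (Real.exp (-y) / (1 - Real.exp (-y))) y := h2.log hne
    have h4 : HasDerivAt F
        ((- -Real.exp (-y) + (1 - a) ^ 2 * (Real.exp (-y) / (1 - Real.exp (-y)))) / (a * (2 - a))) y :=
      (h1.neg.add (h3.const_mul ((1 - a) ^ 2))).div_const _
    convert h4 using 1
    rw [hf]
    have h2a : (2 : ℝ) - a ≠ 0 := by linarith
    rw [neg_neg]
    field_simp [hne, ha0.ne', h2a]
  have hcont : ContinuousOn F (Set.Ici t) := fun y hy =>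
    (hderiv y (lt_of_lt_of_le ht hy)).continuousAt.continuousWithinAt
  have htend : Filter.Tendsto F Filter.atTop (nhds 0) := by
    have hexp : Filter.Tendsto (fun y : ℝ => Real.exp (-y)) Filter.atTop (nhds 0) := by
      exact Real.tendsto_exp_neg_atTop_nhds_zero
    have hlog : Filter.Tendsto (fun y : ℝ => Real.log (1 - Real.exp (-y))) Filter.atTop
        (nhds 0) := by
      have : Filter.Tendsto (fun y : ℝ => 1 - Real.exp (-y)) Filter.atTop (nhds 1) := by
        simpa using (tendsto_const_nhds.sub hexp)
      have := (Real.continuousAt_log (by norm_num : (1:ℝ) ≠ 0)).tendsto.comp this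
      simpa [Function.comp_def] using this
    have : Filter.Tendsto F Filter.atTop (nhds ((-0 + (1 - a) ^ 2 * 0) / (a * (2 - a)))) := by
      exact ((hexp.neg.add (hlog.const_mul _))).div_const _
    simpa using this
  have hint : IntegrableOn f (Set.Ioi t) := by
    have hg : IntegrableOn (fun y : ℝ => Real.exp (-y) / a) (Set.Ioi t) := by
      have := (exp_neg_integrableOn_Ioi t (by norm_num : (0:ℝ) < 1)).div_const a
      simpa [IntegrableOn] using this
    refine hg.mono' ?_ ?_
    · apply Measurable.aestronglyMeasurable
      apply Measurable.div
      · fun_prop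
      · fun_prop
    · filter_upwards [ae_restrict_mem measurableSet_Ioi] with y hy
      have hyt : t < y := hy
      have hE1 : Real.exp (-y) < a := Real.exp_lt_exp.mpr (by linarith)
      have hEpos : 0 < Real.exp (-y) := Real.exp_pos _
      have h1E : 0 < 1 - Real.exp (-y) := by linarith
      have hnum : 0 ≤ (1 - Real.exp (-y)) * Real.exp (-y) + Real.exp (-y) * (1 - a) ^ 2 :=
        add_nonneg (mul_nonneg h1E.le hEpos.le) (mul_nonneg hEpos.le (sq_nonneg _))
      have hdenpos : 0 < a * (1 - Real.exp (-y)) * (2 - a) :=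
        mul_pos (mul_pos ha0 h1E) (by linarith)
      rw [Real.norm_eq_abs, hf, abs_of_nonneg (div_nonneg hnum hdenpos.le),
        div_le_div_iff₀ hdenpos ha0]
      nlinarith [mul_nonneg (mul_nonneg hEpos.le ha0.le)
        (mul_nonneg (by linarith : (0:ℝ) ≤ 1 - a) (by linarith : (0:ℝ) ≤ a - Real.exp (-y)))]
  have key := MeasureTheory.integral_Ioi_of_hasDerivAt_of_tendsto (hcont t (Set.mem_Ici.mpr le_rfl))
    (fun y hy => hderiv y (lt_trans ht hy)) hint htend
  rw [hf] at key
  rw [key, hFdef]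
  have hne : 1 - a ≠ 0 := by linarith
  have h2a : (2 : ℝ) - a ≠ 0 := by linarith
  field_simp
  ring
end

section
/- Let X₁, X₂, X₃ be independent and identically distributed nonnegative real-valued random variables with common survival function F̄(t) = P(Xᵢ > t), let T = min(X₁, max(X₂, X₃)) and T₁ = min(X₁, X₂, X₃). Then for all 0 ≤ x < y, P(T₁ > x and T > y) = 2F̄(x)F̄(y)² − F̄(y)³, and for all 0 ≤ y ≤ x, P(T₁ > x and T > y) = F̄(x)³. -/
open MeasureTheory ProbabilityTheory

lemma prod3_aux {Ω : Type*} [MeasureSpace Ω] [IsProbabilityMeasure (ℙ : Measure Ω)]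
    (X : Fin 3 → Ω → ℝ)
    (hindep : iIndepFun (m := fun _ => Real.measurableSpace) X ℙ)
    (a b c : ℝ) :
    ℙ {ω | a < X 0 ω ∧ b < X 1 ω ∧ c < X 2 ω} =
      ℙ {ω | a < X 0 ω} * ℙ {ω | b < X 1 ω} * ℙ {ω | c < X 2 ω} := by
  have hset : {ω | a < X 0 ω ∧ b < X 1 ω ∧ c < X 2 ω} =
      ⋂ i, X i ⁻¹' Set.Ioi (![a, b, c] i) := by
    ext ω
    simp [Fin.forall_fin_succ, Set.mem_Ioi]
  rw [hset, hindep.meas_iInter (fun i => ⟨Set.Ioi (![a, b, c] i), measurableSet_Ioi, rfl⟩)]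
  rw [Fin.prod_univ_three]
  rfl

/-- Joint survival function of `(T₁, T)` where `T₁ = min(X₁,X₂,X₃)` and
`T = min(X₁, max(X₂,X₃))`, for IID nonnegative components with common survival
function `F̄`. -/
theorem joint_survival_first_failure_series_parallel_iid
    {Ω : Type*} [MeasureSpace Ω] [IsProbabilityMeasure (ℙ : Measure Ω)]
    (X : Fin 3 → Ω → ℝ) (hmeas : ∀ i, Measurable (X i))
    (hnonneg : ∀ i ω, 0 ≤ X i ω)
    (hindep : iIndepFun (m := fun _ => Real.measurableSpace) X ℙ)
    (Fbar : ℝ → ℝ)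
    (hF : ∀ i t, (ℙ {ω | t < X i ω}).toReal = Fbar t)
    (T T₁ : Ω → ℝ)
    (hT : ∀ ω, T ω = min (X 0 ω) (max (X 1 ω) (X 2 ω)))
    (hT₁ : ∀ ω, T₁ ω = min (X 0 ω) (min (X 1 ω) (X 2 ω))) :
    (∀ x y : ℝ, 0 ≤ x → x < y →
        (ℙ {ω | x < T₁ ω ∧ y < T ω}).toReal =
          2 * Fbar x * (Fbar y) ^ 2 - (Fbar y) ^ 3) ∧
    (∀ x y : ℝ, 0 ≤ y → y ≤ x →
        (ℙ {ω | x < T₁ ω ∧ y < T ω}).toReal = (Fbar x) ^ 3) := by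
  have hprod : ∀ a b c : ℝ, (ℙ {ω | a < X 0 ω ∧ b < X 1 ω ∧ c < X 2 ω}).toReal =
      Fbar a * Fbar b * Fbar c := by
    intro a b c
    rw [prod3_aux X hindep a b c, ENNReal.toReal_mul, ENNReal.toReal_mul,
      hF 0 a, hF 1 b, hF 2 c]
  constructor
  · intro x y hx hxy
    -- decompose
    set A : Set Ω := {ω | y < X 0 ω ∧ y < X 1 ω ∧ x < X 2 ω} with hA
    set B : Set Ω := {ω | y < X 0 ω ∧ x < X 1 ω ∧ y < X 2 ω} with hB
    have hE : {ω | x < T₁ ω ∧ y < T ω} = A ∪ B := by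
      ext ω
      simp only [hT, hT₁, Set.mem_setOf_eq, lt_min_iff, lt_max_iff, Set.mem_union, hA, hB]
      constructor
      · rintro ⟨⟨_, h1, h2⟩, h0, h12⟩
        rcases h12 with h | h
        · exact Or.inl ⟨h0, h, h2⟩
        · exact Or.inr ⟨h0, h1, h⟩
      · rintro (⟨h0, h1, h2⟩ | ⟨h0, h1, h2⟩)
        · exact ⟨⟨lt_trans hxy h0, lt_trans hxy h1, h2⟩, h0, Or.inl h1⟩
        · exact ⟨⟨lt_trans hxy h0, h1, lt_trans hxy h2⟩, h0, Or.inr h2⟩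
    have hAB : A ∩ B = {ω | y < X 0 ω ∧ y < X 1 ω ∧ y < X 2 ω} := by
      ext ω
      simp only [Set.mem_inter_iff, Set.mem_setOf_eq, hA, hB]
      constructor
      · rintro ⟨⟨h0, h1, _⟩, _, _, h2⟩
        exact ⟨h0, h1, h2⟩
      · rintro ⟨h0, h1, h2⟩
        exact ⟨⟨h0, h1, lt_trans hxy h2⟩, h0, lt_trans hxy h1, h2⟩
    have hmA : MeasurableSet A := by
      apply MeasurableSet.inter (measurableSet_lt measurable_const (hmeas 0))
      exact MeasurableSet.inter (measurableSet_lt measurable_const (hmeas 1))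
        (measurableSet_lt measurable_const (hmeas 2))
    have hmB : MeasurableSet B := by
      apply MeasurableSet.inter (measurableSet_lt measurable_const (hmeas 0))
      exact MeasurableSet.inter (measurableSet_lt measurable_const (hmeas 1))
        (measurableSet_lt measurable_const (hmeas 2))
    have hunion : ℙ (A ∪ B) + ℙ (A ∩ B) = ℙ A + ℙ B :=
      measure_union_add_inter A hmB
    have hfin : ∀ s : Set Ω, ℙ s ≠ ⊤ := fun s => measure_ne_top ℙ s
    have h1 : (ℙ (A ∪ B)).toReal + (ℙ (A ∩ B)).toReal = (ℙ A).toReal + (ℙ B).toReal := by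
      rw [← ENNReal.toReal_add (hfin _) (hfin _), ← ENNReal.toReal_add (hfin _) (hfin _), hunion]
    have hAv : (ℙ A).toReal = Fbar y * Fbar y * Fbar x := hprod y y x
    have hBv : (ℙ B).toReal = Fbar y * Fbar x * Fbar y := hprod y x y
    have hABv : (ℙ (A ∩ B)).toReal = Fbar y * Fbar y * Fbar y := by
      rw [hAB]; exact hprod y y y
    rw [hE]
    rw [hAv, hBv, hABv] at h1
    nlinarith [h1]
  · intro x y hy hyx
    have hE : {ω | x < T₁ ω ∧ y < T ω} = {ω | x < X 0 ω ∧ x < X 1 ω ∧ x < X 2 ω} := by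
      ext ω
      simp only [hT, hT₁, Set.mem_setOf_eq, lt_min_iff, lt_max_iff]
      constructor
      · rintro ⟨⟨h0, h1, h2⟩, _⟩
        exact ⟨h0, h1, h2⟩
      · rintro ⟨h0, h1, h2⟩
        exact ⟨⟨h0, h1, h2⟩, lt_of_le_of_lt hyx h0, Or.inl (lt_of_le_of_lt hyx h1)⟩
    rw [hE, hprod]
    ring
end
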